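/- Polarisation can restore information aggregation: suppose H is a continuous CDF with H(1/2) < 1/2 and suppose V0(H) ≥ 1/2 where V0(H) = H(1/2) + ∫_{1/2}^{1} φ(x) dH(x) for a fixed continuous function φ : [1/2, 1] → [0, 1]. Define the family H_r(x) = H((1−r)x + r/2) for r ∈ [0, 1). Then V0(H_r) is continuous in r, V0(H_r) → H(1/2) < 1/2 as r → 1, and hence there exists r ∈ (0,1) with V0(H_r) < 1/2 while V1(H_r) > V0(H_r); moreover each H_r with r > 0 admits greater polarisation than H, i.e. H_r(x) ≥ H(x) for x ≤ 1/2 and H_r(x) ≤ H(x) for x ≥ 1/2. -/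

import Mathlib

open Set Filter intervalIntegral

lemma aux_subst (h φ ψ : ℝ → ℝ) (hcong : ∀ x ∈ Set.Icc (1/2:ℝ) 1, φ x = ψ x) {r : ℝ} (hr : r ≠ 1) :
    (∫ x in (1/2:ℝ)..1, φ x * ((1 - r) * h ((1 - r) * x + r / 2)))
      = ∫ u in (1/2:ℝ)..(1 - r/2), ψ ((u - r/2)/(1-r)) * h u := by
  have hc : (1 - r) ≠ 0 := sub_ne_zero.2 (Ne.symm hr)
  set f : ℝ → ℝ := fun u => ψ ((u - r/2)/(1-r)) * h u with hf
  calc (∫ x in (1/2:ℝ)..1, φ x * ((1 - r) * h ((1 - r) * x + r / 2)))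
      = ∫ x in (1/2:ℝ)..1, (1 - r) • f ((1 - r) * x + r/2) := by
        apply intervalIntegral.integral_congr
        intro x hx
        rw [uIcc_of_le (by norm_num)] at hx
        have : ((1 - r) * x + r/2 - r/2)/(1 - r) = x := by field_simp; ring
        simp only [hf, smul_eq_mul, this]
        rw [hcong x hx]; ring
    _ = (1 - r) • ∫ x in (1/2:ℝ)..1, f ((1 - r) * x + r/2) := intervalIntegral.integral_smul _ _
    _ = (1 - r) • ((1 - r)⁻¹ • ∫ u in ((1-r) * (1/2) + r/2)..((1-r) * 1 + r/2), f u) := by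
        rw [intervalIntegral.integral_comp_mul_add f hc]
    _ = ∫ u in (1/2:ℝ)..(1 - r/2), f u := by
        rw [smul_smul, mul_inv_cancel₀ hc, one_smul]
        congr 1 <;> ring

/-- polarisation can restore information aggregation.
With `H_r(x) = H((1−r)x + r/2)` and vote shares
`V_θ(r) = H(1/2) + ∫_{1/2}^1 φ_θ(x) (1−r) h((1−r)x + r/2) dx`,
if `H(1/2) < 1/2 ≤ V0(0)` then `V0` is continuous in `r`, tends to
`H(1/2) < 1/2` as `r → 1⁻`, there is an `r ∈ (0,1)` with `V0(r) < 1/2` and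
`V0(r) < V1(r)`, and each `H_r` (for `r ∈ (0,1)`) admits greater
polarisation than `H`. -/
theorem stmt_11 (H h φ0 φ1 : ℝ → ℝ)
    (hHc : Continuous H) (hHmono : StrictMono H)
    (hHderiv : ∀ x, HasDerivAt H (h x) x) (hh : ∀ x, 0 < h x)
    (hφ0c : ContinuousOn φ0 (Set.Icc (1 / 2 : ℝ) 1))
    (hφ1c : ContinuousOn φ1 (Set.Icc (1 / 2 : ℝ) 1))
    (hφ0mem : ∀ x ∈ Set.Icc (1 / 2 : ℝ) 1, φ0 x ∈ Set.Icc (0 : ℝ) 1)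
    (hφlt : ∀ x ∈ Set.Ioo (1 / 2 : ℝ) 1, φ0 x < φ1 x)
    (hH12 : H (1 / 2) < 1 / 2)
    (V0 V1 : ℝ → ℝ)
    (hV0 : ∀ r, V0 r = H (1 / 2) + ∫ x in (1 / 2 : ℝ)..1,
        φ0 x * ((1 - r) * h ((1 - r) * x + r / 2)))
    (hV1 : ∀ r, V1 r = H (1 / 2) + ∫ x in (1 / 2 : ℝ)..1,
        φ1 x * ((1 - r) * h ((1 - r) * x + r / 2)))
    (hV0init : 1 / 2 ≤ V0 0) :
    ContinuousOn V0 (Set.Ico (0 : ℝ) 1) ∧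
    Tendsto V0 (nhdsWithin 1 (Set.Iio 1)) (nhds (H (1 / 2))) ∧
    (∃ r ∈ Set.Ioo (0 : ℝ) 1, V0 r < 1 / 2 ∧ V0 r < V1 r) ∧
    (∀ r ∈ Set.Ioo (0 : ℝ) 1,
      (∀ x ≤ (1 / 2 : ℝ), H x ≤ H ((1 - r) * x + r / 2)) ∧
      (∀ x, (1 / 2 : ℝ) ≤ x → H ((1 - r) * x + r / 2) ≤ H x)) := by
  -- clamping to [1/2, 1]
  have hclmem : ∀ u : ℝ, max (1/2) (min 1 u) ∈ Icc (1/2:ℝ) 1 :=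
    fun u => ⟨le_max_left _ _, max_le (by norm_num) (min_le_left _ _)⟩
  have hcleq : ∀ x ∈ Icc (1/2:ℝ) 1, max (1/2) (min 1 x) = x := by
    intro x hx; rw [min_eq_right hx.2, max_eq_right hx.1]
  set ψ0 : ℝ → ℝ := fun u => φ0 (max (1/2) (min 1 u)) with hψ0def
  set ψ1 : ℝ → ℝ := fun u => φ1 (max (1/2) (min 1 u)) with hψ1def
  have hclc : Continuous (fun u : ℝ => max (1/2) (min 1 u)) :=
    continuous_const.max (continuous_const.min continuous_id)
  have hψ0c : Continuous ψ0 := hφ0c.comp_continuous hclc hclmem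
  have hψ1c : Continuous ψ1 := hφ1c.comp_continuous hclc hclmem
  have hψ0mem : ∀ u, ψ0 u ∈ Icc (0:ℝ) 1 := fun u => hφ0mem _ (hclmem u)
  have hcong0 : ∀ x ∈ Icc (1/2:ℝ) 1, φ0 x = ψ0 x := by
    intro x hx; rw [hψ0def]; simp only [hcleq x hx]
  have hcong1 : ∀ x ∈ Icc (1/2:ℝ) 1, φ1 x = ψ1 x := by
    intro x hx; rw [hψ1def]; simp only [hcleq x hx]
  have hmeas_h : Measurable h := by
    have : h = deriv H := funext fun x => ((hHderiv x).deriv).symm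
    rw [this]; exact measurable_deriv H
  have hInt : ∀ a b : ℝ, IntervalIntegrable h MeasureTheory.volume a b := fun a b =>
    intervalIntegrable_deriv_of_nonneg hHc.continuousOn (fun x _ => hHderiv x)
      (fun x _ => (hh x).le)
  have hFTC : ∀ a b : ℝ, (∫ u in a..b, h u) = H b - H a := fun a b =>
    intervalIntegral.integral_eq_sub_of_hasDerivAt (fun x _ => hHderiv x) (hInt a b)
  have hV0' : ∀ r : ℝ, r ≠ 1 →
      V0 r = H (1/2) + ∫ u in (1/2:ℝ)..(1 - r/2), ψ0 ((u - r/2)/(1-r)) * h u := by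
    intro r hr; rw [hV0 r, aux_subst h φ0 ψ0 hcong0 hr]
  have hV1' : ∀ r : ℝ, r ≠ 1 →
      V1 r = H (1/2) + ∫ u in (1/2:ℝ)..(1 - r/2), ψ1 ((u - r/2)/(1-r)) * h u := by
    intro r hr; rw [hV1 r, aux_subst h φ1 ψ1 hcong1 hr]
  -- Part 1 : continuity on [0,1)
  have hGV : ∀ r ∈ Ico (0:ℝ) 1, V0 r = H (1/2) + ∫ u in (1/2:ℝ)..1,
      Set.indicator {x : ℝ | x ≤ 1 - r/2} (fun u => ψ0 ((u - r/2)/(1-r)) * h u) u := by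
    intro r hr
    rw [hV0' r (ne_of_lt hr.2)]
    congr 1
    exact (intervalIntegral.integral_indicator ⟨by linarith [hr.2], by linarith [hr.1]⟩).symm
  have hcontG : ∀ r0 ∈ Ico (0:ℝ) 1, ContinuousAt (fun r => H (1/2) + ∫ u in (1/2:ℝ)..1,
      Set.indicator {x : ℝ | x ≤ 1 - r/2} (fun u => ψ0 ((u - r/2)/(1-r)) * h u) u) r0 := by
    intro r0 hr0
    apply continuousAt_const.add
    apply intervalIntegral.continuousAt_of_dominated_interval (bound := h)
    · refine Filter.Eventually.of_forall fun r => ?_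
      exact (((hψ0c.comp ((continuous_id.sub continuous_const).div_const _)).measurable.mul
        hmeas_h).indicator measurableSet_Iic).aestronglyMeasurable
    · refine Filter.Eventually.of_forall fun r => MeasureTheory.ae_of_all _ fun u _ => ?_
      calc ‖Set.indicator {x : ℝ | x ≤ 1 - r/2} (fun u => ψ0 ((u - r/2)/(1-r)) * h u) u‖
          ≤ ‖ψ0 ((u - r/2)/(1-r)) * h u‖ := norm_indicator_le_norm_self _ _
        _ ≤ h u := by
            rw [norm_mul, Real.norm_eq_abs, Real.norm_eq_abs,
              abs_of_pos (hh u),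
              abs_of_nonneg (hψ0mem ((u - r/2)/(1-r))).1]
            nlinarith [(hψ0mem ((u - r/2)/(1-r))).2, hh u]
    · exact hInt _ _
    · have hne : ∀ᵐ u : ℝ, u ≠ 1 - r0/2 := by
        rw [MeasureTheory.ae_iff]
        simp only [not_not, Set.setOf_eq_eq_singleton]
        exact MeasureTheory.measure_singleton _
      refine hne.mono fun u hu _ => ?_
      rcases lt_or_gt_of_ne hu with hlt | hgt
      · have hev : ∀ᶠ r in nhds r0, u < 1 - r/2 :=
          continuousAt_const.eventually_lt (by fun_prop) hlt
        refine ContinuousAt.congr (f := fun r => ψ0 ((u - r/2)/(1-r)) * h u) ?_ ?_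
        · have hc1 : ContinuousAt (fun r : ℝ => (u - r/2)/(1-r)) r0 :=
            ContinuousAt.div (by fun_prop) (by fun_prop)
              (by simp only [ne_eq, sub_eq_zero]; exact fun hc => (ne_of_lt hr0.2) hc.symm)
          exact (hψ0c.continuousAt.comp hc1).mul continuousAt_const
        · refine hev.mono fun r hr => ?_
          show ψ0 ((u - r/2)/(1-r)) * h u
            = Set.indicator {x : ℝ | x ≤ 1 - r/2} (fun u => ψ0 ((u - r/2)/(1-r)) * h u) u
          rw [Set.indicator_of_mem (show u ∈ {x : ℝ | x ≤ 1 - r/2} from le_of_lt hr)]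
      · have hev : ∀ᶠ r in nhds r0, 1 - r/2 < u :=
          ContinuousAt.eventually_lt (by fun_prop) continuousAt_const hgt
        refine ContinuousAt.congr (f := fun _ : ℝ => (0:ℝ)) continuousAt_const ?_
        refine hev.mono fun r hr => ?_
        show (0:ℝ)
          = Set.indicator {x : ℝ | x ≤ 1 - r/2} (fun u => ψ0 ((u - r/2)/(1-r)) * h u) u
        rw [Set.indicator_of_notMem (show u ∉ {x : ℝ | x ≤ 1 - r/2} from not_le.2 hr)]
  have part1 : ContinuousOn V0 (Ico (0:ℝ) 1) := by
    intro r0 hr0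
    exact ((hcontG r0 hr0).continuousWithinAt).congr (fun r hr => hGV r hr) (hGV r0 hr0)
  -- squeeze bounds
  have hsq : ∀ r ∈ Ioo (0:ℝ) 1, H (1/2) ≤ V0 r ∧ V0 r ≤ H (1 - r/2) := by
    intro r hr
    have hr1 : r ≠ 1 := ne_of_lt hr.2
    have hab : (1/2:ℝ) ≤ 1 - r/2 := by linarith [hr.2]
    rw [hV0' r hr1]
    constructor
    · have h0 : 0 ≤ ∫ u in (1/2:ℝ)..(1-r/2), ψ0 ((u - r/2)/(1-r)) * h u :=
        intervalIntegral.integral_nonneg hab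
          (fun u _ => mul_nonneg (hψ0mem _).1 (hh u).le)
      linarith
    · have hmono : (∫ u in (1/2:ℝ)..(1-r/2), ψ0 ((u - r/2)/(1-r)) * h u)
          ≤ ∫ u in (1/2:ℝ)..(1-r/2), h u := by
        refine intervalIntegral.integral_mono_on hab
          ((hInt _ _).continuousOn_mul
            ((hψ0c.comp ((continuous_id.sub continuous_const).div_const _)).continuousOn))
          (hInt _ _) (fun u _ => ?_)
        calc ψ0 ((u - r/2)/(1-r)) * h u ≤ 1 * h u :=
              mul_le_mul_of_nonneg_right (hψ0mem _).2 (hh u).le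
          _ = h u := one_mul _
      rw [hFTC] at hmono
      linarith
  have hmemIoo : Ioo (0:ℝ) 1 ∈ nhdsWithin (1:ℝ) (Iio 1) :=
    Ioo_mem_nhdsLT_of_mem ⟨zero_lt_one, le_refl 1⟩
  have part2 : Tendsto V0 (nhdsWithin 1 (Iio 1)) (nhds (H (1/2))) := by
    have hup : Tendsto (fun r : ℝ => H (1 - r/2)) (nhdsWithin 1 (Iio 1)) (nhds (H (1/2))) := by
      have h1 : Tendsto (fun r : ℝ => 1 - r/2) (nhdsWithin (1:ℝ) (Iio 1)) (nhds (1/2:ℝ)) := by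
        have hc : Continuous (fun r : ℝ => 1 - r/2) :=
          continuous_const.sub (continuous_id.div_const 2)
        have h2 := (hc.tendsto 1).mono_left (nhdsWithin_le_nhds (s := Iio (1:ℝ)))
        norm_num at h2
        exact h2
      exact (hHc.tendsto _).comp h1
    refine tendsto_of_tendsto_of_tendsto_of_le_of_le' tendsto_const_nhds hup ?_ ?_
    · exact Filter.eventually_of_mem hmemIoo fun r hr => (hsq r hr).1
    · exact Filter.eventually_of_mem hmemIoo fun r hr => (hsq r hr).2
  -- strict comparison V0 < V1 on (0,1)
  have hstrict : ∀ r ∈ Ioo (0:ℝ) 1, V0 r < V1 r := by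
    intro r hr
    have hr1 : r ≠ 1 := ne_of_lt hr.2
    have h1r : (0:ℝ) < 1 - r := by linarith [hr.2]
    have hab : (1/2:ℝ) ≤ 1 - r/2 := by linarith [hr.2]
    have hblt : (1/2:ℝ) < 1 - r/2 := by linarith [hr.1]
    have hacont : Continuous (fun u : ℝ => (u - r/2)/(1-r)) :=
      (continuous_id.sub continuous_const).div_const _
    have haIoo : ∀ u ∈ Ioo (1/2:ℝ) (1 - r/2), (u - r/2)/(1-r) ∈ Ioo (1/2:ℝ) 1 := by
      intro u hu
      constructor
      · rw [lt_div_iff₀ h1r]; nlinarith [hu.1]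
      · rw [div_lt_one h1r]; linarith [hu.2]
    have I0 : IntervalIntegrable (fun u => ψ0 ((u - r/2)/(1-r)) * h u)
        MeasureTheory.volume (1/2) (1 - r/2) :=
      (hInt _ _).continuousOn_mul ((hψ0c.comp hacont).continuousOn)
    have I1 : IntervalIntegrable (fun u => ψ1 ((u - r/2)/(1-r)) * h u)
        MeasureTheory.volume (1/2) (1 - r/2) :=
      (hInt _ _).continuousOn_mul ((hψ1c.comp hacont).continuousOn)
    set d : ℝ → ℝ := fun u => (ψ1 ((u - r/2)/(1-r)) - ψ0 ((u - r/2)/(1-r))) * h u with hd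
    have hkey : ∀ u ∈ Ioo (1/2:ℝ) (1 - r/2), 0 < d u := by
      intro u hu
      have h1 := haIoo u hu
      have h2 : φ0 ((u - r/2)/(1-r)) < φ1 ((u - r/2)/(1-r)) := hφlt _ h1
      have e0 := hcong0 _ (Ioo_subset_Icc_self h1)
      have e1 := hcong1 _ (Ioo_subset_Icc_self h1)
      rw [hd]
      exact mul_pos (by rw [← e0, ← e1]; linarith) (hh u)
    have hId : IntervalIntegrable d MeasureTheory.volume (1/2) (1 - r/2) := by
      have := I1.sub I0
      simpa [hd, sub_mul] using this
    have hdpos : 0 < ∫ u in (1/2:ℝ)..(1-r/2), d u := by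
      rw [intervalIntegral.integral_of_le hab]
      rw [MeasureTheory.setIntegral_pos_iff_support_of_nonneg_ae]
      · refine lt_of_lt_of_le ?_ (MeasureTheory.measure_mono
          (fun u hu => ⟨ne_of_gt (hkey u hu), Ioo_subset_Ioc_self hu⟩))
        rw [Real.volume_Ioo]
        exact ENNReal.ofReal_pos.2 (by linarith)
      · have hne : ∀ᵐ u ∂(MeasureTheory.volume.restrict (Ioc (1/2:ℝ) (1-r/2))),
            u ≠ 1 - r/2 := by
          refine MeasureTheory.ae_restrict_of_ae ?_
          rw [MeasureTheory.ae_iff]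
          simp only [not_not, Set.setOf_eq_eq_singleton]
          exact MeasureTheory.measure_singleton _
        filter_upwards [hne, MeasureTheory.ae_restrict_mem measurableSet_Ioc] with u hu1 hu2
        exact (hkey u ⟨hu2.1, lt_of_le_of_ne hu2.2 hu1⟩).le
      · exact (intervalIntegrable_iff_integrableOn_Ioc_of_le hab).1 hId
    rw [hV0' r hr1, hV1' r hr1]
    have heq : (∫ u in (1/2:ℝ)..(1-r/2), d u)
        = (∫ u in (1/2:ℝ)..(1-r/2), ψ1 ((u - r/2)/(1-r)) * h u)
          - ∫ u in (1/2:ℝ)..(1-r/2), ψ0 ((u - r/2)/(1-r)) * h u := by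
      rw [← intervalIntegral.integral_sub I1 I0]
      apply intervalIntegral.integral_congr
      intro u _
      rw [hd]; ring
    linarith
  -- Part 3 : existence of r
  have part3 : ∃ r ∈ Ioo (0:ℝ) 1, V0 r < 1/2 ∧ V0 r < V1 r := by
    have h1 : ∀ᶠ r in nhdsWithin (1:ℝ) (Iio 1), V0 r < 1/2 :=
      part2.eventually_lt_const hH12
    obtain ⟨r, hrIoo, hrlt⟩ :=
      ((Filter.eventually_of_mem hmemIoo fun r hr => hr).and h1).exists
    exact ⟨r, hrIoo, hrlt, hstrict r hrIoo⟩
  -- Part 4 : polarisation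
  refine ⟨part1, part2, part3, ?_⟩
  intro r hr
  constructor
  · intro x hx
    exact hHmono.monotone (by nlinarith [hr.1, hr.2])
  · intro x hx
    exact hHmono.monotone (by nlinarith [hr.1, hr.2])
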